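/- Every counter system whose step relation 𝒯 consists exactly of the synchronization steps induced by a finite set of synchronization transitions is fully ≼₀-compatible. -/
import Mathlib


namespace CS01

variable {C Q A : Type*}

/-- Configurations of a counter system: a controller state and a counter vector. -/
abbrev Conf (C Q : Type*) := C × (Q → ℕ)

/-- The order `≼₀`: same controller state, pointwise smaller counters,
and the same zero pattern. -/
def Le0 (x y : Conf C Q) : Prop :=
  x.1 = y.1 ∧ (∀ q, x.2 q ≤ y.2 q) ∧ ∀ q, (x.2 q = 0 ↔ y.2 q = 0)

/-- The product order `≼₀ × ≼₀` on pairs of configurations. -/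
def ProdLe0 (s t : Conf C Q × Conf C Q) : Prop :=
  Le0 s.1 t.1 ∧ Le0 s.2 t.2

/-- The abstraction `α`, mapping a configuration to its 01-abstraction. -/
def alpha (x : Conf C Q) : Conf C Q :=
  (x.1, fun q => if x.2 q = 0 then 0 else 1)

/-- Forward `≼₀`-compatibility of a step relation. -/
def FwdCompat (T : Set (Conf C Q × Conf C Q)) : Prop :=
  ∀ x y d, (x, y) ∈ T → Le0 x d → ∃ d', (d, d') ∈ T ∧ Le0 y d'

/-- Backward `≼₀`-compatibility of a step relation. -/
def BwdCompat (T : Set (Conf C Q × Conf C Q)) : Prop :=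
  ∀ x y d', (x, y) ∈ T → Le0 y d' → ∃ d, (d, d') ∈ T ∧ Le0 x d

/-- Steps of a counter system are size-preserving. -/
def SizePreserving [Fintype Q] (T : Set (Conf C Q × Conf C Q)) : Prop :=
  ∀ t ∈ T, ∑ q, t.1.2 q = ∑ q, t.2.2 q

/-- A step of the 01-counter system `𝒞_α`. -/
def AbsStep (T : Set (Conf C Q × Conf C Q)) (x' y' : Conf C Q) : Prop :=
  ∃ t ∈ T, alpha t.1 = x' ∧ alpha t.2 = y'

/-- A finite run of the counter system, starting in an initial configuration. -/
def IsRun (T : Set (Conf C Q × Conf C Q)) (c0 : C) (Q0 : Set Q)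
    {n : ℕ} (ρ : Fin (n + 1) → Conf C Q) : Prop :=
  (ρ 0).1 = c0 ∧ (∀ q ∉ Q0, (ρ 0).2 q = 0) ∧
    ∀ i : Fin n, (ρ i.castSucc, ρ i.succ) ∈ T

/-- A finite run of the 01-counter system, starting in an initial (0/1-valued)
abstract configuration. -/
def IsAbsRun (T : Set (Conf C Q × Conf C Q)) (c0 : C) (Q0 : Set Q)
    {n : ℕ} (σ : Fin (n + 1) → Conf C Q) : Prop :=
  (σ 0).1 = c0 ∧ (∀ q, (σ 0).2 q ≤ 1) ∧ (∀ q ∉ Q0, (σ 0).2 q = 0) ∧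
    ∀ i : Fin n, AbsStep T (σ i.castSucc) (σ i.succ)

/-- Reachability in the counter system. -/
def Reach (T : Set (Conf C Q × Conf C Q)) (c0 : C) (Q0 : Set Q)
    (x : Conf C Q) : Prop :=
  ∃ (n : ℕ) (ρ : Fin (n + 1) → Conf C Q), IsRun T c0 Q0 ρ ∧ ρ (Fin.last n) = x

/-- Reachability in the 01-counter system. -/
def AbsReach (T : Set (Conf C Q × Conf C Q)) (c0 : C) (Q0 : Set Q)
    (x : Conf C Q) : Prop :=
  ∃ (n : ℕ) (σ : Fin (n + 1) → Conf C Q), IsAbsRun T c0 Q0 σ ∧ σ (Fin.last n) = x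

/-- The counter vector obtained when `i` processes move from `p` to `p'`. -/
def moveN [DecidableEq Q] (v : Q → ℕ) (p p' : Q) (i : ℕ) : Q → ℕ :=
  fun q => v q - (if q = p then i else 0) + (if q = p' then i else 0)

/-- A synchronization step on letter `a`: every process whose current state has
an outgoing `a`-transition takes some `a`-transition; processes without an
`a`-transition stay put. `k p p'` is the number of user processes taking the
transition `(p, a, p')`. -/
def SyncStepOn [Fintype Q] (ΔC : Set (C × A × C)) (ΔQ : Set (Q × A × Q)) (a : A)
    (x y : Conf C Q) : Prop :=
  ((∃ c', (x.1, a, c') ∈ ΔC) → (x.1, a, y.1) ∈ ΔC) ∧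
  (¬ (∃ c', (x.1, a, c') ∈ ΔC) → y.1 = x.1) ∧
  ∃ k : Q → Q → ℕ,
    (∀ p p', k p p' ≠ 0 → (p, a, p') ∈ ΔQ) ∧
    (∀ q, (∃ q', (q, a, q') ∈ ΔQ) → ∑ p', k q p' = x.2 q) ∧
    (∀ q, (∃ q', (q, a, q') ∈ ΔQ) → y.2 q = ∑ p, k p q) ∧
    (∀ q, ¬ (∃ q', (q, a, q') ∈ ΔQ) → y.2 q = x.2 q + ∑ p, k p q)

/-- A synchronization step: a synchronization step on some letter `a`. -/
def SyncStep [Fintype Q] (ΔC : Set (C × A × C)) (ΔQ : Set (Q × A × Q))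
    (x y : Conf C Q) : Prop :=
  ∃ a : A, SyncStepOn ΔC ΔQ a x y

open Finset in
private lemma fwd_on [Fintype Q] [Nonempty Q] (ΔC : Set (C × A × C)) (ΔQ : Set (Q × A × Q))
    (a : A) {x y d : Conf C Q} (h : SyncStepOn ΔC ΔQ a x y) (hxd : Le0 x d) :
    ∃ d', SyncStepOn ΔC ΔQ a d d' ∧ Le0 y d' := by
  classical
  obtain ⟨hC1, hC2, k, hk1, hk2, hk3, hk4⟩ := h
  obtain ⟨hc, hle, hz⟩ := hxd
  have hch : ∀ p : Q, ∃ p', (x.2 p ≠ 0 ∧ (∃ q', (p, a, q') ∈ ΔQ)) → k p p' ≠ 0 := by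
    intro p
    by_cases hp : x.2 p ≠ 0 ∧ (∃ q', (p, a, q') ∈ ΔQ)
    · obtain ⟨p', _, hp'⟩ := Finset.exists_ne_zero_of_sum_ne_zero (s := univ) (f := k p)
        (by rw [hk2 p hp.2]; exact hp.1)
      exact ⟨p', fun _ => hp'⟩
    · exact ⟨Classical.arbitrary Q, fun hh => absurd hh hp⟩
  choose ch hch using hch
  set k' : Q → Q → ℕ := fun p p' =>
    k p p' + if x.2 p ≠ 0 ∧ (∃ q', (p, a, q') ∈ ΔQ) ∧ p' = ch p then d.2 p - x.2 p else 0
    with hk'def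
  have hkge : ∀ p p', k p p' ≤ k' p p' := fun p p' => Nat.le_add_right _ _
  have hkz : ∀ p p', (k' p p' = 0 ↔ k p p' = 0) := by
    intro p p'
    constructor
    · intro h0
      simp only [hk'def, Nat.add_eq_zero] at h0
      exact h0.1
    · intro h0
      simp only [hk'def, Nat.add_eq_zero, ite_eq_right_iff]
      refine ⟨h0, fun hcond => ?_⟩
      exact absurd (hcond.2.2 ▸ h0) (hch p ⟨hcond.1, hcond.2.1⟩)
  have hrow : ∀ p, (∃ q', (p, a, q') ∈ ΔQ) → ∑ p', k' p p' = d.2 p := by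
    intro p hp
    have hsplit : ∑ p', k' p p' = (∑ p', k p p') +
        ∑ p', (if x.2 p ≠ 0 ∧ (∃ q', (p, a, q') ∈ ΔQ) ∧ p' = ch p then d.2 p - x.2 p else 0) :=
      Finset.sum_add_distrib
    by_cases hx0 : x.2 p = 0
    · have hd0 : d.2 p = 0 := (hz p).mp hx0
      rw [hsplit, hk2 p hp, hx0, hd0]
      simp [hx0]
    · rw [hsplit, hk2 p hp]
      have h2 : ∑ p', (if x.2 p ≠ 0 ∧ (∃ q', (p, a, q') ∈ ΔQ) ∧ p' = ch p
          then d.2 p - x.2 p else 0) = d.2 p - x.2 p := by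
        simp only [ne_eq, hx0, not_false_eq_true, hp, true_and]
        rw [Finset.sum_ite_eq' univ (ch p) (fun _ => d.2 p - x.2 p)]
        simp
      rw [h2]
      have := hle p
      omega
  refine ⟨(y.1, fun q => if (∃ q', (q, a, q') ∈ ΔQ) then ∑ p, k' p q
      else d.2 q + ∑ p, k' p q), ⟨?_, ?_, k', ?_, ?_, ?_, ?_⟩, rfl, ?_, ?_⟩
  · intro hcd
    rw [← hc] at hcd ⊢
    exact hC1 hcd
  · intro hcd
    rw [← hc] at hcd
    simp only [← hc]
    exact hC2 hcd
  · intro p p' hne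
    exact hk1 p p' (fun h0 => hne ((hkz p p').mpr h0))
  · exact fun q hq => hrow q hq
  · intro q hq
    simp [hq]
  · intro q hq
    simp [hq]
  · intro q
    by_cases hq : ∃ q', (q, a, q') ∈ ΔQ
    · simp only [hq, if_true]
      rw [hk3 q hq]
      exact Finset.sum_le_sum (fun p _ => hkge p q)
    · simp only [hq, if_false]
      rw [hk4 q hq]
      exact Nat.add_le_add (hle q) (Finset.sum_le_sum (fun p _ => hkge p q))
  · intro q
    have hsz : (∑ p, k p q = 0) ↔ (∑ p, k' p q = 0) := by
      rw [Finset.sum_eq_zero_iff, Finset.sum_eq_zero_iff]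
      constructor
      · exact fun h p hp => (hkz p q).mpr (h p hp)
      · exact fun h p hp => (hkz p q).mp (h p hp)
    by_cases hq : ∃ q', (q, a, q') ∈ ΔQ
    · simp only [hq, if_true]
      rw [hk3 q hq]
      exact hsz
    · simp only [hq, if_false]
      rw [hk4 q hq]
      have := hz q
      constructor
      · intro h0
        have h1 : x.2 q = 0 ∧ ∑ p, k p q = 0 := by omega
        have := hsz.mp h1.2
        have := (hz q).mp h1.1
        omega
      · intro h0
        have h1 : d.2 q = 0 ∧ ∑ p, k' p q = 0 := by omega
        have := hsz.mpr h1.2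
        have := (hz q).mpr h1.1
        omega

open Finset in
private lemma bwd_on [Fintype Q] [Nonempty Q] (ΔC : Set (C × A × C)) (ΔQ : Set (Q × A × Q))
    (a : A) {x y d' : Conf C Q} (h : SyncStepOn ΔC ΔQ a x y) (hyd : Le0 y d') :
    ∃ d, SyncStepOn ΔC ΔQ a d d' ∧ Le0 x d := by
  classical
  obtain ⟨hC1, hC2, k, hk1, hk2, hk3, hk4⟩ := h
  obtain ⟨hc, hle, hz⟩ := hyd
  have hch : ∀ q : Q, ∃ p, (∑ p, k p q ≠ 0) → k p q ≠ 0 := by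
    intro q
    by_cases hq : ∑ p, k p q ≠ 0
    · obtain ⟨p, _, hp⟩ := Finset.exists_ne_zero_of_sum_ne_zero hq
      exact ⟨p, fun _ => hp⟩
    · exact ⟨Classical.arbitrary Q, fun hh => absurd hh hq⟩
  choose ch hch using hch
  set k' : Q → Q → ℕ := fun p q =>
    k p q + if (∑ p, k p q ≠ 0) ∧ p = ch q then d'.2 q - y.2 q else 0 with hk'def
  have hkge : ∀ p q, k p q ≤ k' p q := fun p q => Nat.le_add_right _ _
  have hkz : ∀ p q, (k' p q = 0 ↔ k p q = 0) := by
    intro p q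
    constructor
    · intro h0
      simp only [hk'def, Nat.add_eq_zero] at h0
      exact h0.1
    · intro h0
      simp only [hk'def, Nat.add_eq_zero, ite_eq_right_iff]
      refine ⟨h0, fun hcond => ?_⟩
      exact absurd (hcond.2 ▸ h0) (hch q hcond.1)
  have hcol : ∀ q, ∑ p, k' p q = (∑ p, k p q) + (if ∑ p, k p q ≠ 0 then d'.2 q - y.2 q else 0) := by
    intro q
    have hsplit : ∑ p, k' p q = (∑ p, k p q) +
        ∑ p, (if (∑ p, k p q ≠ 0) ∧ p = ch q then d'.2 q - y.2 q else 0) :=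
      Finset.sum_add_distrib
    rw [hsplit]
    congr 1
    by_cases hq : ∑ p, k p q ≠ 0
    · simp only [ne_eq, hq, not_false_eq_true, true_and, if_true]
      rw [Finset.sum_ite_eq' univ (ch q) (fun _ => d'.2 q - y.2 q)]
      simp
    · simp [hq]
  refine ⟨(x.1, fun q => if (∃ q', (q, a, q') ∈ ΔQ) then ∑ p', k' q p'
      else (if ∑ p, k p q ≠ 0 then x.2 q else d'.2 q)), ⟨?_, ?_, k', ?_, ?_, ?_, ?_⟩,
      rfl, ?_, ?_⟩
  · intro hcd
    rw [← hc]
    exact hC1 hcd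
  · intro hcd
    rw [← hc]
    exact hC2 hcd
  · intro p p' hne
    exact hk1 p p' (fun h0 => hne ((hkz p p').mpr h0))
  · intro q hq
    simp [hq]
  · intro q hq
    rw [hcol q, ← hk3 q hq]
    have := hle q
    by_cases h0 : y.2 q = 0
    · have h2 := (hz q).mp h0
      simp [h0, h2]
    · simp only [h0, ne_eq, not_false_eq_true, if_true]
      omega
  · intro q hq
    simp only [hq, if_false]
    rw [hcol q]
    have hy := hk4 q hq
    have := hle q
    by_cases hS : ∑ p, k p q ≠ 0
    · simp only [ne_eq, hS, not_false_eq_true, if_true]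
      omega
    · simp only [hS, if_false]
      omega
  · intro q
    by_cases hq : ∃ q', (q, a, q') ∈ ΔQ
    · simp only [hq, if_true]
      rw [← hk2 q hq]
      exact Finset.sum_le_sum (fun p _ => hkge q p)
    · simp only [hq, if_false]
      by_cases hS : ∑ p, k p q ≠ 0
      · simp [hS]
      · have hy := hk4 q hq
        have := hle q
        simp only [hS, if_false]
        omega
  · intro q
    by_cases hq : ∃ q', (q, a, q') ∈ ΔQ
    · simp only [hq, if_true]
      rw [← hk2 q hq, Finset.sum_eq_zero_iff, Finset.sum_eq_zero_iff]
      constructor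
      · exact fun h p hp => (hkz q p).mpr (h p hp)
      · exact fun h p hp => (hkz q p).mp (h p hp)
    · simp only [hq, if_false]
      by_cases hS : ∑ p, k p q ≠ 0
      · simp [hS]
      · have hy := hk4 q hq
        have := hz q
        simp only [hS, if_false]
        omega

/-- Every counter system whose steps are exactly the
synchronization steps induced by a finite set of synchronization transitions
is fully `≼₀`-compatible. -/
theorem stmt5 [Fintype C] [Fintype Q] [Nonempty C] [Nonempty Q] [Fintype A]
    (ΔC : Set (C × A × C)) (ΔQ : Set (Q × A × Q))
    (T : Set (Conf C Q × Conf C Q))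
    (hT : ∀ x y : Conf C Q, (x, y) ∈ T ↔ SyncStep ΔC ΔQ x y) :
    FwdCompat T ∧ BwdCompat T := by
  constructor
  · intro x y d hxy hxd
    obtain ⟨a, ha⟩ := (hT x y).mp hxy
    obtain ⟨d', hd', hyd'⟩ := fwd_on ΔC ΔQ a ha hxd
    exact ⟨d', (hT d d').mpr ⟨a, hd'⟩, hyd'⟩
  · intro x y d' hxy hyd
    obtain ⟨a, ha⟩ := (hT x y).mp hxy
    obtain ⟨d, hd, hxd⟩ := bwd_on ΔC ΔQ a ha hyd
    exact ⟨d, (hT d d').mpr ⟨a, hd⟩, hxd⟩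

end CS01
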